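/- Fix c > 0 and let b_n = e^{c√n}. Then: (i) b_{n+1}/b_n → 1 as n → ∞; and (ii) for every x with 0 < x < 1, b_{⌊nx⌋}/b_n → 0 as n → ∞. Consequently the measures α_n = Σ_{i=1}^n ((b_i - b_{i-1})/b_n) δ_{i/n} (with b_0 = 0) converge weakly to the Dirac measure concentrated at 1, even though condition b_{n+1}/b_n → 1 holds; the limit corresponds to ρ = ∞ in Theorem 3. -/

import Mathlib

open Filter Topology Real

/-- Fix `c > 0` and let `b n = exp (c * √n)` (with the convention
`b 0 = 0`).  Then (i) `b (n+1) / b n → 1`; (ii) for every `0 < x < 1`,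
`b ⌊n*x⌋ / b n → 0`; and consequently the measures
`α_n = Σ_{i=1}^n ((b i - b (i-1)) / b n) δ_{i/n}` converge weakly to the Dirac measure
concentrated at `1`, even though `b (n+1) / b n → 1` holds (the case `ρ = ∞`). -/
theorem exp_sqrt_coefficients_concentrate_at_one
    (c : ℝ) (hc : 0 < c)
    (b : ℕ → ℝ)
    (hb : ∀ n : ℕ, b n = if n = 0 then 0 else Real.exp (c * Real.sqrt n)) :
    Tendsto (fun n : ℕ => b (n + 1) / b n) atTop (𝓝 1) ∧
    (∀ x : ℝ, x ∈ Set.Ioo (0 : ℝ) 1 →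
      Tendsto (fun n : ℕ => b ⌊(n : ℝ) * x⌋₊ / b n) atTop (𝓝 0)) ∧
    (∀ h : ℝ → ℝ, Continuous h → (∃ C, ∀ x, |h x| ≤ C) →
      Tendsto (fun n : ℕ => ∑ i ∈ Finset.Icc 1 n,
          h ((i : ℝ) / (n : ℝ)) * ((b i - b (i - 1)) / b n))
        atTop (𝓝 (h 1))) := by
  have hb0 : b 0 = 0 := by simp [hb]
  have hbe : ∀ n : ℕ, n ≠ 0 → b n = Real.exp (c * Real.sqrt n) := by
    intro n hn; rw [hb]; simp [hn]
  have hpos : ∀ n : ℕ, n ≠ 0 → 0 < b n := by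
    intro n hn; rw [hbe n hn]; exact Real.exp_pos _
  have hmono : Monotone b := by
    apply monotone_nat_of_le_succ
    intro n
    rcases eq_or_ne n 0 with rfl | hn
    · rw [hb0]; exact (hpos 1 one_ne_zero).le
    · rw [hbe n hn, hbe (n+1) (Nat.succ_ne_zero n)]
      apply Real.exp_le_exp.mpr
      have hs : Real.sqrt n ≤ Real.sqrt (n+1) := by
        apply Real.sqrt_le_sqrt; push_cast; linarith
      have := hc.le
      push_cast
      nlinarith
  have hnn : ∀ n, 0 ≤ b n := fun n => hb0 ▸ hmono (Nat.zero_le n)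
  have htel : ∀ m : ℕ, ∑ i ∈ Finset.Icc 1 m, (b i - b (i-1)) = b m := by
    intro m
    induction m with
    | zero => simp [hb0]
    | succ k ih =>
      rw [Finset.sum_Icc_succ_top (Nat.succ_le_succ (Nat.zero_le k)), ih]
      simp
  have part1 : Tendsto (fun n : ℕ => b (n + 1) / b n) atTop (𝓝 1) := by
      have hsq : Tendsto (fun n : ℕ => Real.sqrt ((n:ℝ)+1) - Real.sqrt n) atTop (𝓝 0) := by
        have hg : Tendsto (fun n : ℕ => 1 / Real.sqrt n) atTop (𝓝 0) := by
          simp only [one_div]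
          have hs : Tendsto (fun n : ℕ => Real.sqrt n) atTop atTop := by
            apply tendsto_atTop_atTop.mpr
            intro M
            refine ⟨⌈M*M⌉₊, fun n hn => ?_⟩
            rcases le_or_gt M 0 with hM | hM
            · exact hM.trans (Real.sqrt_nonneg _)
            · rw [Real.le_sqrt hM.le]
              calc M^2 = M*M := sq M
                _ ≤ (⌈M*M⌉₊ : ℝ) := Nat.le_ceil _
                _ ≤ (n : ℝ) := by exact_mod_cast hn
              positivity
          exact tendsto_inv_atTop_zero.comp hs
        apply squeeze_zero' (Filter.Eventually.of_forall ?_) ?_ hg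
        · intro n
          have : Real.sqrt n ≤ Real.sqrt ((n:ℝ)+1) := Real.sqrt_le_sqrt (by linarith)
          linarith
        · filter_upwards [eventually_ge_atTop 1] with n hn
          have hn0 : (0:ℝ) < Real.sqrt n := Real.sqrt_pos.mpr (by exact_mod_cast hn)
          have hn1 : (0:ℝ) ≤ (n:ℝ) := by positivity
          have hs1 : (0:ℝ) ≤ Real.sqrt ((n:ℝ)+1) := Real.sqrt_nonneg _
          have h1 : Real.sqrt ((n:ℝ)+1) * Real.sqrt ((n:ℝ)+1) = (n:ℝ)+1 :=
            Real.mul_self_sqrt (by linarith)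
          have h2 : Real.sqrt n * Real.sqrt n = (n:ℝ) := Real.mul_self_sqrt hn1
          have hsum : (0:ℝ) < Real.sqrt ((n:ℝ)+1) + Real.sqrt n := by positivity
          have hkey : Real.sqrt ((n:ℝ)+1) - Real.sqrt n
              = 1 / (Real.sqrt ((n:ℝ)+1) + Real.sqrt n) := by
            rw [eq_div_iff hsum.ne']
            calc (Real.sqrt ((n:ℝ)+1) - Real.sqrt n) * (Real.sqrt ((n:ℝ)+1) + Real.sqrt n)
                = Real.sqrt ((n:ℝ)+1) * Real.sqrt ((n:ℝ)+1) - Real.sqrt n * Real.sqrt n := by ring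
              _ = 1 := by rw [h1, h2]; ring
          rw [hkey]
          exact one_div_le_one_div_of_le hn0 (by linarith)
      have hcont : Tendsto (fun n : ℕ =>
          Real.exp (c * (Real.sqrt ((n:ℝ)+1) - Real.sqrt n))) atTop (𝓝 1) := by
        have h0 : Tendsto (fun n : ℕ => c * (Real.sqrt ((n:ℝ)+1) - Real.sqrt n)) atTop (𝓝 0) := by
          simpa using hsq.const_mul c
        simpa [Function.comp_def] using (Real.continuous_exp.tendsto 0).comp h0
      apply hcont.congr'
      filter_upwards [eventually_ge_atTop 1] with n hn
      rw [hbe n (by omega), hbe (n+1) (by omega), ← Real.exp_sub]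
      push_cast
      ring_nf
  have part2 : ∀ x : ℝ, x ∈ Set.Ioo (0 : ℝ) 1 →
      Tendsto (fun n : ℕ => b ⌊(n : ℝ) * x⌋₊ / b n) atTop (𝓝 0) := by
    rintro x ⟨hx0, hx1⟩
    have hsx : Real.sqrt x < 1 := by
      rw [show (1:ℝ) = Real.sqrt 1 from (Real.sqrt_one).symm]
      exact Real.sqrt_lt_sqrt hx0.le hx1
    have hneg : c * (Real.sqrt x - 1) < 0 := mul_neg_of_pos_of_neg hc (by linarith)
    have key : Tendsto (fun n : ℕ => Real.exp (c * (Real.sqrt x - 1) * Real.sqrt n))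
        atTop (𝓝 0) := by
      apply Real.tendsto_exp_atBot.comp
      have hs : Tendsto (fun n : ℕ => Real.sqrt n) atTop atTop := by
        apply tendsto_atTop_atTop.mpr
        intro M
        refine ⟨⌈M*M⌉₊, fun n hn => ?_⟩
        rcases le_or_gt M 0 with hM | hM
        · exact hM.trans (Real.sqrt_nonneg _)
        · rw [Real.le_sqrt hM.le]
          calc M^2 = M*M := sq M
            _ ≤ (⌈M*M⌉₊ : ℝ) := Nat.le_ceil _
            _ ≤ (n : ℝ) := by exact_mod_cast hn
          positivity
      exact Tendsto.const_mul_atTop_of_neg hneg hs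
    apply squeeze_zero' (Filter.Eventually.of_forall fun n => div_nonneg (hnn _) (hnn _)) ?_ key
    filter_upwards [eventually_ge_atTop 1] with n hn
    have hn0 : (0:ℝ) ≤ (n:ℝ) := by positivity
    have hbn : b n = Real.exp (c * Real.sqrt n) := hbe n (by omega)
    have hnum : b ⌊(n:ℝ)*x⌋₊ ≤ Real.exp (c * Real.sqrt ((n:ℝ)*x)) := by
      rcases eq_or_ne (⌊(n:ℝ)*x⌋₊) 0 with h0 | h0
      · rw [h0, hb0]; exact (Real.exp_pos _).le
      · rw [hbe _ h0]
        apply Real.exp_le_exp.mpr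
        apply mul_le_mul_of_nonneg_left _ hc.le
        exact Real.sqrt_le_sqrt (Nat.floor_le (by positivity))
    have hbnpos : 0 < b n := by rw [hbn]; exact Real.exp_pos _
    calc b ⌊(n:ℝ)*x⌋₊ / b n ≤ Real.exp (c * Real.sqrt ((n:ℝ)*x)) / b n := by gcongr
      _ = Real.exp (c * (Real.sqrt x - 1) * Real.sqrt n) := by
        rw [hbn, ← Real.exp_sub]
        congr 1
        rw [Real.sqrt_mul hn0, mul_comm (Real.sqrt n) (Real.sqrt x)]
        ring
  refine ⟨part1, part2, ?_⟩
  rintro h hcont ⟨C, hC⟩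
  have hC0 : 0 ≤ C := le_trans (abs_nonneg _) (hC 0)
  rw [Metric.tendsto_atTop]
  intro ε hε
  obtain ⟨δ, hδpos, hδ⟩ := Metric.continuousAt_iff.mp (hcont.continuousAt (x := 1))
    (ε/2) (by linarith)
  set x : ℝ := 1 - min (δ/2) (1/2) with hxdef
  have hminpos : 0 < min (δ/2) (1/2) := lt_min (by linarith) (by norm_num)
  have hminle : min (δ/2) (1/2) ≤ 1/2 := min_le_right _ _
  have hxIoo : x ∈ Set.Ioo (0:ℝ) 1 := ⟨by rw [hxdef]; linarith, by rw [hxdef]; linarith⟩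
  have h2 : Tendsto (fun n : ℕ => 2*C * (b ⌊(n:ℝ)*x⌋₊ / b n)) atTop (𝓝 0) := by
    simpa using (part2 x hxIoo).const_mul (2*C)
  have hev1 : ∀ᶠ n : ℕ in atTop, 2*C * (b ⌊(n:ℝ)*x⌋₊ / b n) < ε/2 :=
    h2.eventually_lt_const (by linarith)
  rw [eventually_atTop] at hev1
  obtain ⟨N, hN⟩ := hev1
  refine ⟨max N 1, fun n hn => ?_⟩
  have hn1 : 1 ≤ n := le_trans (le_max_right N 1) hn
  have hnN := hN n (le_trans (le_max_left N 1) hn)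
  set m := ⌊(n:ℝ)*x⌋₊ with hm
  have hnpos : (0:ℝ) < n := by exact_mod_cast hn1
  have hbn : 0 < b n := hpos n (by omega)
  have hmn : m ≤ n := by
    have hxn : (n:ℝ)*x ≤ n := by nlinarith [hxIoo.2.le, hxIoo.1.le]
    calc m ≤ ⌊(n:ℝ)⌋₊ := Nat.floor_le_floor hxn
      _ = n := Nat.floor_natCast n
  have hwnn : ∀ i : ℕ, 0 ≤ (b i - b (i-1)) / b n := fun i =>
    div_nonneg (sub_nonneg.mpr (hmono (Nat.sub_le i 1))) hbn.le
  have hsum1 : ∑ i ∈ Finset.Icc 1 n, ((b i - b (i-1)) / b n) = 1 := by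
    rw [← Finset.sum_div, htel n, div_self hbn.ne']
  have hsumm : ∑ i ∈ Finset.Icc 1 m, ((b i - b (i-1)) / b n) = b m / b n := by
    rw [← Finset.sum_div, htel m]
  rw [Real.dist_eq]
  have hrepr : (∑ i ∈ Finset.Icc 1 n, h ((i:ℝ)/(n:ℝ)) * ((b i - b (i-1)) / b n)) - h 1
      = ∑ i ∈ Finset.Icc 1 n, (h ((i:ℝ)/(n:ℝ)) - h 1) * ((b i - b (i-1)) / b n) := by
    simp only [sub_mul]
    rw [Finset.sum_sub_distrib, ← Finset.mul_sum, hsum1, mul_one]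
  rw [hrepr]
  have hIoc : Finset.Icc 1 n = Finset.Ioc 0 n := Finset.Icc_add_one_left_eq_Ioc 0 n
  have hIocm : Finset.Icc 1 m = Finset.Ioc 0 m := Finset.Icc_add_one_left_eq_Ioc 0 m
  have habs : |∑ i ∈ Finset.Icc 1 n, (h ((i:ℝ)/(n:ℝ)) - h 1) * ((b i - b (i-1)) / b n)|
      ≤ 2*C * (b m / b n) + ε/2 := by
    calc |∑ i ∈ Finset.Icc 1 n, (h ((i:ℝ)/(n:ℝ)) - h 1) * ((b i - b (i-1)) / b n)|
        ≤ ∑ i ∈ Finset.Icc 1 n, |(h ((i:ℝ)/(n:ℝ)) - h 1) * ((b i - b (i-1)) / b n)| :=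
          Finset.abs_sum_le_sum_abs _ _
      _ = ∑ i ∈ Finset.Icc 1 n, |h ((i:ℝ)/(n:ℝ)) - h 1| * ((b i - b (i-1)) / b n) := by
          apply Finset.sum_congr rfl
          intro i _
          rw [abs_mul, abs_of_nonneg (hwnn i)]
      _ = (∑ i ∈ Finset.Ioc 0 m, |h ((i:ℝ)/(n:ℝ)) - h 1| * ((b i - b (i-1)) / b n))
          + ∑ i ∈ Finset.Ioc m n, |h ((i:ℝ)/(n:ℝ)) - h 1| * ((b i - b (i-1)) / b n) := by
          rw [hIoc, ← Finset.sum_Ioc_consecutive _ (Nat.zero_le m) hmn]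
      _ ≤ 2*C * (b m / b n) + ε/2 := by
          apply add_le_add
          · calc ∑ i ∈ Finset.Ioc 0 m, |h ((i:ℝ)/(n:ℝ)) - h 1| * ((b i - b (i-1)) / b n)
                ≤ ∑ i ∈ Finset.Ioc 0 m, (2*C) * ((b i - b (i-1)) / b n) := by
                  apply Finset.sum_le_sum
                  intro i _
                  apply mul_le_mul_of_nonneg_right _ (hwnn i)
                  calc |h ((i:ℝ)/(n:ℝ)) - h 1| ≤ |h ((i:ℝ)/(n:ℝ))| + |h 1| := abs_sub _ _
                    _ ≤ C + C := add_le_add (hC _) (hC _)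
                    _ = 2*C := by ring
              _ = 2*C * (b m / b n) := by
                  rw [← Finset.mul_sum, ← hIocm, hsumm]
          · have hterm : ∀ i ∈ Finset.Ioc m n, |h ((i:ℝ)/(n:ℝ)) - h 1| ≤ ε/2 := by
              intro i hi
              rw [Finset.mem_Ioc] at hi
              have hi1 : (n:ℝ)*x < i := by
                calc (n:ℝ)*x < m + 1 := Nat.lt_floor_add_one _
                  _ ≤ i := by exact_mod_cast Nat.succ_le_of_lt hi.1
              have hi2 : (i:ℝ) ≤ n := by exact_mod_cast hi.2
              have hdist : dist ((i:ℝ)/(n:ℝ)) 1 < δ := by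
                have hle1 : (i:ℝ)/(n:ℝ) - 1 ≤ 0 := by
                  rw [sub_nonpos]
                  exact div_le_one_of_le₀ hi2 hnpos.le
                rw [Real.dist_eq, abs_of_nonpos hle1]
                have hgt : x < (i:ℝ)/(n:ℝ) := by
                  rw [lt_div_iff₀ hnpos]; nlinarith
                have : 1 - (i:ℝ)/(n:ℝ) < 1 - x := by linarith
                rw [hxdef] at this
                calc -((i:ℝ)/(n:ℝ) - 1) = 1 - (i:ℝ)/(n:ℝ) := by ring
                  _ < min (δ/2) (1/2) := by linarith
                  _ ≤ δ/2 := min_le_left _ _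
                  _ < δ := by linarith
              have := hδ hdist
              rw [Real.dist_eq] at this
              exact this.le
            calc ∑ i ∈ Finset.Ioc m n, |h ((i:ℝ)/(n:ℝ)) - h 1| * ((b i - b (i-1)) / b n)
                ≤ ∑ i ∈ Finset.Ioc m n, (ε/2) * ((b i - b (i-1)) / b n) := by
                  apply Finset.sum_le_sum
                  intro i hi
                  exact mul_le_mul_of_nonneg_right (hterm i hi) (hwnn i)
              _ = (ε/2) * ∑ i ∈ Finset.Ioc m n, ((b i - b (i-1)) / b n) := by
                  rw [Finset.mul_sum]
              _ ≤ (ε/2) * 1 := by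
                  apply mul_le_mul_of_nonneg_left _ (by linarith)
                  have hsplit : (∑ i ∈ Finset.Ioc 0 m, ((b i - b (i-1)) / b n))
                      + ∑ i ∈ Finset.Ioc m n, ((b i - b (i-1)) / b n)
                      = ∑ i ∈ Finset.Ioc 0 n, ((b i - b (i-1)) / b n) :=
                    Finset.sum_Ioc_consecutive _ (Nat.zero_le m) hmn
                  rw [← hIoc, hsum1] at hsplit
                  rw [← hIocm, hsumm] at hsplit
                  have : 0 ≤ b m / b n := div_nonneg (hnn m) hbn.le
                  linarith
              _ = ε/2 := mul_one _
  calc |∑ i ∈ Finset.Icc 1 n, (h ((i:ℝ)/(n:ℝ)) - h 1) * ((b i - b (i-1)) / b n)|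
      ≤ 2*C * (b m / b n) + ε/2 := habs
    _ < ε/2 + ε/2 := by linarith
    _ = ε := by ring
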